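/- Let n ≥ 1, let 1 ≤ p ≤ ∞ and 1 ≤ q < ∞, let α, β > -1 and let a, b, c be real numbers. If T_{a,b,c} is bounded from L^p_α to L^q_β (with L^∞ in place of L^p_α when p = ∞), then -qa < β+1. -/

import Mathlib

open MeasureTheory Complex
open scoped ENNReal

noncomputable section

/-- `ℂ^n` with the Euclidean (Hermitian) structure. -/
abbrev Cn (n : ℕ) := EuclideanSpace ℂ (Fin n)

instance (n : ℕ) : MeasurableSpace (Cn n) := MeasurableSpace.comap WithLp.ofLp MeasurableSpace.pi
instance (n : ℕ) : BorelSpace (Cn n) := PiLp.borelSpace 2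

/-- The open unit ball `B_n` of `ℂ^n`. -/
def unitBall (n : ℕ) : Set (Cn n) := Metric.ball 0 1

/-- Lebesgue volume measure on `B_n`, normalized so that `v(B_n) = 1`. -/
def vol (n : ℕ) : Measure (Cn n) :=
  (volume (unitBall n))⁻¹ • volume.restrict (unitBall n)

/-- The weighted measure `dv_γ = c_γ (1-|z|²)^γ dv`, with
`c_γ = Γ(n+γ+1)/(n! Γ(γ+1))`. -/
def wvol (n : ℕ) (γ : ℝ) : Measure (Cn n) :=
  (vol n).withDensity fun z =>
    ENNReal.ofReal
      ((Real.Gamma ((n : ℝ) + γ + 1) / ((n.factorial : ℝ) * Real.Gamma (γ + 1))) *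
        (1 - ‖z‖ ^ 2) ^ γ)

/-- The Hermitian pairing `⟨z,w⟩ = ∑ z_j conj(w_j)`. -/
def herm {n : ℕ} (z w : Cn n) : ℂ := ∑ j, z j * (starRingEnd ℂ) (w j)

/-- Kernel of the Forelli–Rudin type operator `T_{a,b,c}`:
`(1-|z|²)^a (1-|w|²)^b (1-⟨z,w⟩)^{-c}` (principal branch power). -/
def Tker (n : ℕ) (a b c : ℝ) (z w : Cn n) : ℂ :=
  (((1 - ‖z‖ ^ 2) ^ a * (1 - ‖w‖ ^ 2) ^ b : ℝ) : ℂ) * (1 - herm z w) ^ (-(c : ℂ))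

/-- Kernel of the Forelli–Rudin type operator `S_{a,b,c}`:
`(1-|z|²)^a (1-|w|²)^b |1-⟨z,w⟩|^{-c}`. -/
def Sker (n : ℕ) (a b c : ℝ) (z w : Cn n) : ℂ :=
  (((1 - ‖z‖ ^ 2) ^ a * (1 - ‖w‖ ^ 2) ^ b * ‖1 - herm z w‖ ^ (-c) : ℝ) : ℂ)

/-- The integral operator with kernel `K` (integration in `w` with respect to `ρ`)
is bounded from `L^p(μ)` to `L^q(ν)`: there is `C ≥ 0` such that for every
`f ∈ L^p(μ)` the defining integral converges absolutely for a.e. `z` and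
`‖A f‖_{L^q(ν)} ≤ C ‖f‖_{L^p(μ)}`. -/
def IsBddOp (n : ℕ) (K : Cn n → Cn n → ℂ) (ρ : Measure (Cn n))
    (p q : ℝ≥0∞) (μ ν : Measure (Cn n)) : Prop :=
  ∃ C : ℝ, 0 ≤ C ∧ ∀ f : Cn n → ℂ, MemLp f p μ →
    (∀ᵐ z ∂(vol n), Integrable (fun w => K z w * f w) ρ) ∧
    eLpNorm (fun z => ∫ w, K z w * f w ∂ρ) q ν ≤ ENNReal.ofReal C * eLpNorm f p μ



-- ===== auxiliary lemmas =====

lemma herm_eq_inner {n : ℕ} (z w : Cn n) : herm z w = @inner ℂ _ _ w z := by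
  rw [herm, PiLp.inner_apply]
  congr 1

lemma herm_abs_le {n : ℕ} (z w : Cn n) : ‖herm z w‖ ≤ ‖w‖ * ‖z‖ := by
  rw [herm_eq_inner]
  exact norm_inner_le_norm w z

lemma delta_exists (c : ℝ) : ∃ δ : ℝ, 0 < δ ∧ δ < 1 ∧
    ∀ u : ℂ, ‖u‖ ≤ δ → (1/2 : ℝ) ≤ ((1 - u) ^ (-(c:ℂ))).re := by
  have hcont : ContinuousAt (fun u : ℂ => ((1 - u) ^ (-(c:ℂ))).re) 0 := by
    apply Complex.continuous_re.continuousAt.comp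
    apply ContinuousAt.cpow
    · exact (continuous_const.sub continuous_id).continuousAt
    · exact continuousAt_const
    · simp [Complex.slitPlane]
  have h0 : ((1 - (0:ℂ)) ^ (-(c:ℂ))).re = 1 := by
    simp [Complex.one_cpow]
  rw [Metric.continuousAt_iff] at hcont
  obtain ⟨ε, hε, hball⟩ := hcont (1/2) (by norm_num)
  refine ⟨min (ε/2) (1/2), by positivity, ?_, ?_⟩
  · exact lt_of_le_of_lt (min_le_right _ _) (by norm_num)
  · intro u hu
    have : dist u 0 < ε := by
      rw [Complex.dist_eq, sub_zero]
      calc ‖u‖ ≤ min (ε/2) (1/2) := hu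
        _ ≤ ε/2 := min_le_left _ _
        _ < ε := by linarith
    have := hball this
    rw [h0, Real.dist_eq] at this
    have := abs_lt.mp this
    linarith [this.1]

lemma div_lemma (n : ℕ) (hn : 1 ≤ n) :
    ∫⁻ z in Metric.ball (0:Cn n) 1, ENNReal.ofReal ((1 - ‖z‖)⁻¹) ∂volume = ⊤ := by
  haveI : Inhabited (Fin n) := ⟨⟨0, hn⟩⟩
  haveI : Nontrivial (Cn n) := inferInstance
  set m := Module.finrank ℝ (Cn n) with hm
  have hm1 : 1 ≤ m := Module.finrank_pos
  set V := volume (Metric.ball (0:Cn n) 1) with hV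
  have hV0 : V ≠ 0 := (Metric.measure_ball_pos _ _ one_pos).ne'
  have hVt : V ≠ ⊤ := measure_ball_lt_top.ne
  set ρ : ℕ → ℝ := fun k => (1 - (1/2:ℝ)^k) ^ ((m:ℝ)⁻¹) with hρ
  have hbase : ∀ k : ℕ, 0 ≤ 1 - (1/2:ℝ)^k := by
    intro k
    have : (1/2:ℝ)^k ≤ 1 := pow_le_one₀ (by norm_num) (by norm_num)
    linarith
  have hρ0 : ∀ k, 0 ≤ ρ k := fun k => Real.rpow_nonneg (hbase k) _
  have hρpow : ∀ k, (ρ k) ^ m = 1 - (1/2:ℝ)^k := by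
    intro k
    exact Real.rpow_inv_natCast_pow (hbase k) (by omega)
  have hρlt1 : ∀ k, ρ k < 1 := by
    intro k
    by_contra h
    push_neg at h
    have : (1:ℝ) ≤ (ρ k) ^ m := one_le_pow₀ h
    rw [hρpow k] at this
    have : (0:ℝ) < (1/2:ℝ)^k := by positivity
    linarith
  have hρmono : Monotone ρ := by
    intro j k hjk
    apply Real.rpow_le_rpow (hbase j) _ (by positivity)
    have : (1/2:ℝ)^k ≤ (1/2:ℝ)^j := pow_le_pow_of_le_one (by norm_num) (by norm_num) hjk
    linarith
  have h1ρ : ∀ k, 1 - ρ k ≤ (1/2:ℝ)^k := by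
    intro k
    have : (ρ k) ^ m ≤ ρ k := pow_le_of_le_one (hρ0 k) (hρlt1 k).le (by omega)
    rw [hρpow k] at this
    linarith
  set S : ℕ → Set (Cn n) := fun k => Metric.ball 0 (ρ (k+1)) \ Metric.ball 0 (ρ k) with hS
  have hSmeas : ∀ k, MeasurableSet (S k) :=
    fun k => measurableSet_ball.diff measurableSet_ball
  have hSsub : ∀ k, S k ⊆ Metric.ball (0:Cn n) 1 := by
    intro k z hz
    exact Metric.ball_subset_ball (hρlt1 (k+1)).le hz.1
  have hSdisj : Pairwise (Function.onFun Disjoint S) := by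
    have key : ∀ j k, j < k → Disjoint (S j) (S k) := by
      intro j k hjk
      rw [Set.disjoint_left]
      rintro z ⟨hz1, -⟩ ⟨-, hz2⟩
      exact hz2 (Metric.ball_subset_ball (hρmono hjk) hz1)
    intro j k hjk
    rcases lt_or_gt_of_ne hjk with h | h
    · exact key j k h
    · exact (key k j h).symm
  have hμS : ∀ k, volume (S k) = ENNReal.ofReal ((1/2:ℝ)^(k+1)) * V := by
    intro k
    have hsub : Metric.ball (0:Cn n) (ρ k) ⊆ Metric.ball 0 (ρ (k+1)) :=
      Metric.ball_subset_ball (hρmono (Nat.le_succ k))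
    rw [hS]
    rw [measure_diff hsub measurableSet_ball.nullMeasurableSet measure_ball_lt_top.ne]
    rw [Measure.addHaar_ball volume 0 (hρ0 (k+1)), Measure.addHaar_ball volume 0 (hρ0 k)]
    rw [hρpow, hρpow]
    have hsplit : 1 - (1/2:ℝ)^(k+1) = (1 - (1/2:ℝ)^k) + (1/2:ℝ)^(k+1) := by
      rw [pow_succ]; ring
    rw [hsplit, ENNReal.ofReal_add (hbase k) (by positivity), add_mul]
    rw [ENNReal.add_sub_cancel_left (by finiteness)]
  have hshell : ∀ k, ENNReal.ofReal ((1/2:ℝ)) * V ≤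
      ∫⁻ z in S k, ENNReal.ofReal ((1 - ‖z‖)⁻¹) ∂volume := by
    intro k
    have hpt : ∀ z ∈ S k, ENNReal.ofReal ((2:ℝ)^k) ≤ ENNReal.ofReal ((1 - ‖z‖)⁻¹) := by
      rintro z ⟨hz1, hz2⟩
      simp only [Metric.mem_ball, dist_zero_right] at hz1 hz2
      push_neg at hz2
      have h1 : 0 < 1 - ‖z‖ := by linarith [hρlt1 (k+1)]
      have h2 : 1 - ‖z‖ ≤ (1/2:ℝ)^k := by linarith [h1ρ k]
      apply ENNReal.ofReal_le_ofReal
      calc (2:ℝ)^k = ((1/2:ℝ)^k)⁻¹ := by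
            rw [← inv_pow]; norm_num
        _ ≤ (1 - ‖z‖)⁻¹ := by
            apply inv_anti₀ h1 h2
    calc ENNReal.ofReal ((1/2:ℝ)) * V
        = ENNReal.ofReal ((2:ℝ)^k) * (ENNReal.ofReal ((1/2:ℝ)^(k+1)) * V) := by
          rw [← mul_assoc, ← ENNReal.ofReal_mul (by positivity)]
          congr 2
          rw [pow_succ]
          field_simp
          rw [← mul_pow]; norm_num
      _ = ENNReal.ofReal ((2:ℝ)^k) * volume (S k) := by rw [hμS k]
      _ = ∫⁻ _ in S k, ENNReal.ofReal ((2:ℝ)^k) ∂volume := by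
          rw [setLIntegral_const]
      _ ≤ ∫⁻ z in S k, ENNReal.ofReal ((1 - ‖z‖)⁻¹) ∂volume :=
          setLIntegral_mono' (hSmeas k) hpt
  have hUnion : ∫⁻ z in ⋃ k, S k, ENNReal.ofReal ((1 - ‖z‖)⁻¹) ∂volume
      ≤ ∫⁻ z in Metric.ball (0:Cn n) 1, ENNReal.ofReal ((1 - ‖z‖)⁻¹) ∂volume :=
    lintegral_mono_set (Set.iUnion_subset hSsub)
  rw [lintegral_iUnion hSmeas hSdisj] at hUnion
  have htop : (∑' k : ℕ, ∫⁻ z in S k, ENNReal.ofReal ((1 - ‖z‖)⁻¹) ∂volume) = ⊤ := by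
    apply eq_top_iff.2
    calc (⊤:ℝ≥0∞) = ∑' _ : ℕ, ENNReal.ofReal ((1/2:ℝ)) * V := by
          rw [ENNReal.tsum_const_eq_top_of_ne_zero]
          intro h
          rw [mul_eq_zero] at h
          rcases h with h | h
          · simp [ENNReal.ofReal_eq_zero] at h
          · exact hV0 h
      _ ≤ _ := ENNReal.tsum_le_tsum hshell
  rw [htop] at hUnion
  exact eq_top_iff.2 hUnion

lemma vol_finite (n : ℕ) : IsFiniteMeasure (vol n) := by
  constructor
  rw [vol, Measure.smul_apply, Measure.restrict_apply_univ, smul_eq_mul]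
  exact (ENNReal.inv_mul_le_one _).trans_lt ENNReal.one_lt_top

lemma lower_bound (n : ℕ) (a b c δ : ℝ) (hδ0 : 0 < δ) (hδ1 : δ < 1)
    (hδc : ∀ u : ℂ, ‖u‖ ≤ δ → (1/2:ℝ) ≤ ((1 - u) ^ (-(c:ℂ))).re)
    (z : Cn n) (hz : ‖z‖ < 1)
    (hint : Integrable (fun w => Tker n a b c z w *
      (Metric.closedBall (0:Cn n) δ).indicator (fun _ => (1:ℂ)) w) (vol n)) :
    (min 1 ((1-δ^2)^b) / 2) * (vol n (Metric.closedBall 0 δ)).toReal * (1-‖z‖^2)^a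
      ≤ ‖∫ w, Tker n a b c z w *
          (Metric.closedBall (0:Cn n) δ).indicator (fun _ => (1:ℂ)) w ∂(vol n)‖ := by
  haveI := vol_finite n
  set κ := min 1 ((1-δ^2)^b) with hκdef
  have hκ0 : 0 ≤ κ := le_min zero_le_one (Real.rpow_nonneg (by nlinarith) b)
  set F := fun w => Tker n a b c z w *
      (Metric.closedBall (0:Cn n) δ).indicator (fun _ => (1:ℂ)) w with hF
  set g := (Metric.closedBall (0:Cn n) δ).indicator
      (fun _ : Cn n => (κ/2) * (1-‖z‖^2)^a) with hg
  have hza : (0:ℝ) ≤ (1-‖z‖^2)^a := Real.rpow_nonneg (by nlinarith [norm_nonneg z]) a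
  have hgint : Integrable g (vol n) :=
    (integrable_const _).indicator Metric.isClosed_closedBall.measurableSet
  have hmono : ∀ w, g w ≤ (F w).re := by
    intro w
    by_cases hw : w ∈ Metric.closedBall (0:Cn n) δ
    · have hwδ : ‖w‖ ≤ δ := by
        simpa [Metric.mem_closedBall, dist_zero_right] using hw
      have hw1 : ‖w‖ < 1 := lt_of_le_of_lt hwδ hδ1
      rw [hg, Set.indicator_of_mem hw, hF]
      simp only [Set.indicator_of_mem hw, mul_one]
      rw [Tker, Complex.re_ofReal_mul]
      have habs : ‖herm z w‖ ≤ δ := by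
        calc ‖herm z w‖ ≤ ‖w‖ * ‖z‖ := herm_abs_le z w
          _ ≤ δ * 1 := mul_le_mul hwδ hz.le (norm_nonneg z) hδ0.le
          _ = δ := mul_one δ
      have hre : (1/2:ℝ) ≤ ((1 - herm z w) ^ (-(c:ℂ))).re := hδc _ habs
      have hwb : κ ≤ (1-‖w‖^2)^b := by
        rcases le_or_gt 0 b with hb | hb
        · calc κ ≤ (1-δ^2)^b := min_le_right _ _
            _ ≤ (1-‖w‖^2)^b := by
              apply Real.rpow_le_rpow (by nlinarith) (by nlinarith [norm_nonneg w]) hb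
        · calc κ ≤ 1 := min_le_left _ _
            _ = (1:ℝ)^b := (Real.one_rpow b).symm
            _ ≤ (1-‖w‖^2)^b := by
              apply Real.rpow_le_rpow_of_nonpos (by nlinarith [norm_nonneg w]) (by nlinarith [norm_nonneg w]) hb.le
      have h1 : κ/2 ≤ (1-‖w‖^2)^b * ((1 - herm z w) ^ (-(c:ℂ))).re := by
        calc κ/2 = κ * (1/2) := by ring
          _ ≤ (1-‖w‖^2)^b * ((1 - herm z w) ^ (-(c:ℂ))).re :=
            mul_le_mul hwb hre (by norm_num) (Real.rpow_nonneg (by nlinarith [norm_nonneg w]) b)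
      calc κ/2 * (1-‖z‖^2)^a = (1-‖z‖^2)^a * (κ/2) := by ring
        _ ≤ (1-‖z‖^2)^a * ((1-‖w‖^2)^b * ((1 - herm z w) ^ (-(c:ℂ))).re) :=
            mul_le_mul_of_nonneg_left h1 hza
        _ = (1-‖z‖^2)^a * (1-‖w‖^2)^b * ((1 - herm z w) ^ (-(c:ℂ))).re := by ring
    · rw [hg, Set.indicator_of_notMem hw, hF]
      simp only [Set.indicator_of_notMem hw, mul_zero]
      simp
  have hint_re : Integrable (fun w => (F w).re) (vol n) := hint.re
  have h2 : ∫ w, g w ∂(vol n) ≤ ∫ w, (F w).re ∂(vol n) :=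
    integral_mono hgint hint_re hmono
  have h3 : ∫ w, g w ∂(vol n)
      = (vol n (Metric.closedBall 0 δ)).toReal * ((κ/2) * (1-‖z‖^2)^a) := by
    rw [hg, integral_indicator_const _ Metric.isClosed_closedBall.measurableSet]
    simp [smul_eq_mul, Measure.real]
  have h4 : ∫ w, (F w).re ∂(vol n) = (∫ w, F w ∂(vol n)).re :=
    by simpa using integral_re hint
  calc κ/2 * (vol n (Metric.closedBall 0 δ)).toReal * (1-‖z‖^2)^a
      = (vol n (Metric.closedBall 0 δ)).toReal * ((κ/2) * (1-‖z‖^2)^a) := by ring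
    _ ≤ (∫ w, F w ∂(vol n)).re := by rw [← h4, ← h3] at *; exact h2.trans_eq rfl
    _ ≤ |(∫ w, F w ∂(vol n)).re| := le_abs_self _
    _ ≤ ‖∫ w, F w ∂(vol n)‖ := Complex.abs_re_le_norm _
    _ = ‖∫ w, F w ∂(vol n)‖ := rfl

lemma base_meas (n : ℕ) : Measurable (fun z : Cn n => (1 - ‖z‖ ^ 2 : ℝ)) :=
  (continuous_const.sub (continuous_norm.pow 2)).measurable

lemma dens_meas (n : ℕ) (γ : ℝ) (C : ℝ) : Measurable (fun z : Cn n =>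
    ENNReal.ofReal (C * (1 - ‖z‖ ^ 2) ^ γ)) :=
  ENNReal.measurable_ofReal.comp (((base_meas n).pow_const γ).const_mul C)

lemma elp_top (n : ℕ) (hn : 1 ≤ n) (q β a : ℝ) (hq : 1 ≤ q) (hβ : -1 < β)
    (ht : q * a + β ≤ -1) (m0 : ℝ) (hm0 : 0 < m0) :
    eLpNorm (fun z : Cn n => m0 * (1 - ‖z‖ ^ 2) ^ a) (ENNReal.ofReal q) (wvol n β) = ⊤ := by
  have hq0 : (0:ℝ) < q := by linarith
  have hpne : ENNReal.ofReal q ≠ 0 := by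
    simp only [ne_eq, ENNReal.ofReal_eq_zero, not_le]; linarith
  have hpnt : ENNReal.ofReal q ≠ ⊤ := ENNReal.ofReal_ne_top
  rw [eLpNorm_eq_lintegral_rpow_enorm_toReal hpne hpnt, ENNReal.toReal_ofReal hq0.le]
  set cβ := Real.Gamma ((n : ℝ) + β + 1) / ((n.factorial : ℝ) * Real.Gamma (β + 1)) with hcβ
  have hn' : (1:ℝ) ≤ (n:ℝ) := by exact_mod_cast hn
  have hcβ0 : 0 < cβ := by
    apply div_pos
    · exact Real.Gamma_pos_of_pos (by linarith)
    · exact mul_pos (by exact_mod_cast Nat.factorial_pos n) (Real.Gamma_pos_of_pos (by linarith))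
  have hG : Measurable (fun z : Cn n =>
      ‖m0 * (1 - ‖z‖ ^ 2) ^ a‖ₑ ^ q) :=
    ((((base_meas n).pow_const a).const_mul m0).enorm).pow_const q
  have hlint : ∫⁻ z, ‖m0 * (1 - ‖z‖ ^ 2) ^ a‖ₑ ^ q ∂(wvol n β) = ⊤ := by
    set D := fun z : Cn n => ENNReal.ofReal (cβ * (1 - ‖z‖ ^ 2) ^ β) with hD
    set G := fun z : Cn n => ‖m0 * (1 - ‖z‖ ^ 2) ^ a‖ₑ ^ q with hGdef
    have step : ∫⁻ z, G z ∂(wvol n β) = ∫⁻ z, D z * G z ∂(vol n) := by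
      rw [wvol, lintegral_withDensity_eq_lintegral_mul _ (dens_meas n β cβ) hG]
      simp only [Pi.mul_apply]
      rfl
    rw [step, vol, lintegral_smul_measure]
    set V := volume (unitBall n) with hV
    haveI : Inhabited (Fin n) := ⟨⟨0, hn⟩⟩
    haveI : Nontrivial (Cn n) := inferInstance
    have hV0 : V ≠ 0 := (Metric.measure_ball_pos _ _ one_pos).ne'
    have hVt : V ≠ ⊤ := measure_ball_lt_top.ne
    set K := cβ * m0 ^ q * (2:ℝ) ^ (q * a + β) with hK
    have hK0 : 0 < K := by
      apply mul_pos (mul_pos hcβ0 (Real.rpow_pos_of_pos hm0 q)) (Real.rpow_pos_of_pos two_pos _)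
    have hpt : ∀ z : Cn n, z ∈ Metric.ball (0:Cn n) 1 →
        ENNReal.ofReal (K * (1 - ‖z‖)⁻¹) ≤ D z * G z := by
      intro z hz
      simp only [Metric.mem_ball, dist_zero_right] at hz
      have hx0 : (0:ℝ) < 1 - ‖z‖ ^ 2 := by nlinarith [norm_nonneg z]
      have hx1 : (1 - ‖z‖ ^ 2 : ℝ) ≤ 1 := by nlinarith [norm_nonneg z]
      have hma : (0:ℝ) ≤ m0 * (1 - ‖z‖ ^ 2) ^ a := by positivity
      have e1 : ‖m0 * (1 - ‖z‖ ^ 2) ^ a‖ₑ = ENNReal.ofReal (m0 * (1 - ‖z‖ ^ 2) ^ a) :=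
        Real.enorm_eq_ofReal hma
      have e2 : G z = ENNReal.ofReal ((m0 * (1 - ‖z‖ ^ 2) ^ a) ^ q) := by
        rw [hGdef]; simp only []
        rw [e1, ← ENNReal.ofReal_rpow_of_nonneg hma hq0.le]
      rw [hD]
      simp only []
      rw [e2, ← ENNReal.ofReal_mul (by positivity)]
      apply ENNReal.ofReal_le_ofReal
      set x := (1 - ‖z‖ ^ 2 : ℝ) with hxdef
      have expand : cβ * x ^ β * (m0 * x ^ a) ^ q = cβ * m0 ^ q * x ^ (q * a + β) := by
        rw [Real.mul_rpow hm0.le (Real.rpow_nonneg hx0.le a), ← Real.rpow_mul hx0.le,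
          Real.rpow_add hx0, mul_comm a q]
        ring
      rw [expand]
      have hz1 : (0:ℝ) < 1 - ‖z‖ := by linarith
      have hle2 : x ≤ 2 * (1 - ‖z‖) := by rw [hxdef]; nlinarith [norm_nonneg z]
      have hstep1 : (2 * (1 - ‖z‖)) ^ (q*a+β) ≤ x ^ (q*a+β) :=
        Real.rpow_le_rpow_of_nonpos hx0 hle2 (by linarith)
      have hstep2 : (2 * (1 - ‖z‖)) ^ (q*a+β) = (2:ℝ)^(q*a+β) * (1 - ‖z‖)^(q*a+β) :=
        Real.mul_rpow (by norm_num) hz1.le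
      have hstep3 : (1 - ‖z‖) ^ (-1 : ℝ) ≤ (1 - ‖z‖) ^ (q*a+β) :=
        Real.rpow_le_rpow_of_exponent_ge hz1 (by linarith [norm_nonneg z]) (by linarith)
      have hstep4 : (1 - ‖z‖) ^ (-1 : ℝ) = (1 - ‖z‖)⁻¹ := Real.rpow_neg_one _
      rw [hK]
      calc cβ * m0 ^ q * (2:ℝ) ^ (q * a + β) * (1 - ‖z‖)⁻¹
          = cβ * m0 ^ q * ((2:ℝ) ^ (q * a + β) * (1 - ‖z‖)^ (-1:ℝ)) := by
            rw [hstep4]; ring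
        _ ≤ cβ * m0 ^ q * ((2:ℝ) ^ (q * a + β) * (1 - ‖z‖)^ (q*a+β)) := by
            apply mul_le_mul_of_nonneg_left _ (by positivity)
            exact mul_le_mul_of_nonneg_left hstep3 (by positivity)
        _ = cβ * m0 ^ q * (2 * (1 - ‖z‖)) ^ (q*a+β) := by rw [hstep2]
        _ ≤ cβ * m0 ^ q * x ^ (q*a+β) := by
            apply mul_le_mul_of_nonneg_left hstep1 (by positivity)
    have hlow : ∫⁻ z in unitBall n, ENNReal.ofReal (K * (1 - ‖z‖)⁻¹) ∂volume ≤
        ∫⁻ z in unitBall n, D z * G z ∂volume :=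
      setLIntegral_mono' Metric.isOpen_ball.measurableSet hpt
    have hdiv : ∫⁻ z in unitBall n, ENNReal.ofReal (K * (1 - ‖z‖)⁻¹) ∂volume = ⊤ := by
      have heq : ∀ z : Cn n, ENNReal.ofReal (K * (1 - ‖z‖)⁻¹)
          = ENNReal.ofReal K * ENNReal.ofReal ((1 - ‖z‖)⁻¹) := fun z =>
        ENNReal.ofReal_mul hK0.le
      simp_rw [heq]
      rw [lintegral_const_mul' _ _ ENNReal.ofReal_ne_top]
      rw [unitBall, div_lemma n hn]
      rw [ENNReal.mul_top]
      simp only [ne_eq, ENNReal.ofReal_eq_zero, not_le]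
      linarith
    rw [hdiv] at hlow
    have h2 : ∫⁻ z in unitBall n, D z * G z ∂volume = ⊤ := eq_top_iff.2 hlow
    rw [h2, smul_eq_mul, ENNReal.mul_top (by simpa [ENNReal.inv_eq_zero] using hVt)]
  rw [hlint]
  exact ENNReal.top_rpow_of_pos (by positivity)


lemma wvol_closedBall_ne_top (n : ℕ) (α δ : ℝ) (hα : -1 < α) (hδ1 : δ < 1) :
    wvol n α (Metric.closedBall 0 δ) ≠ ⊤ := by
  haveI := vol_finite n
  set cα := Real.Gamma ((n : ℝ) + α + 1) / ((n.factorial : ℝ) * Real.Gamma (α + 1)) with hcα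
  have hcα0 : 0 ≤ cα := by
    apply le_of_lt
    apply div_pos
    · refine Real.Gamma_pos_of_pos ?_
      have : (0:ℝ) ≤ (n:ℝ) := Nat.cast_nonneg n
      linarith
    · exact mul_pos (by exact_mod_cast Nat.factorial_pos n) (Real.Gamma_pos_of_pos (by linarith))
  set M := cα * max 1 ((1 - δ^2) ^ α) with hM
  have hpt : ∀ z : Cn n, z ∈ Metric.closedBall (0:Cn n) δ →
      ENNReal.ofReal (cα * (1 - ‖z‖ ^ 2) ^ α) ≤ ENNReal.ofReal M := by
    intro z hz
    have hwδ : ‖z‖ ≤ δ := by simpa [Metric.mem_closedBall, dist_zero_right] using hz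
    have h0 : (0:ℝ) ≤ ‖z‖ := norm_nonneg z
    have hx0 : (0:ℝ) < 1 - δ ^ 2 := by nlinarith
    have hxl : 1 - δ ^ 2 ≤ 1 - ‖z‖ ^ 2 := by nlinarith
    have hx1 : 1 - ‖z‖ ^ 2 ≤ 1 := by nlinarith
    apply ENNReal.ofReal_le_ofReal
    apply mul_le_mul_of_nonneg_left _ hcα0
    rcases le_or_gt 0 α with hc | hc
    · calc (1 - ‖z‖ ^ 2) ^ α ≤ 1 := Real.rpow_le_one (by nlinarith) hx1 hc
        _ ≤ max 1 ((1 - δ^2) ^ α) := le_max_left _ _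
    · calc (1 - ‖z‖ ^ 2) ^ α ≤ (1 - δ^2) ^ α :=
          Real.rpow_le_rpow_of_nonpos hx0 hxl hc.le
        _ ≤ max 1 ((1 - δ^2) ^ α) := le_max_right _ _
  rw [wvol, withDensity_apply _ Metric.isClosed_closedBall.measurableSet]
  have hfin : ∫⁻ z in Metric.closedBall 0 δ, ENNReal.ofReal (cα * (1 - ‖z‖ ^ 2) ^ α) ∂(vol n) < ⊤ :=
    calc ∫⁻ z in Metric.closedBall 0 δ, ENNReal.ofReal (cα * (1 - ‖z‖ ^ 2) ^ α) ∂(vol n)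
        ≤ ∫⁻ _ in Metric.closedBall 0 δ, ENNReal.ofReal M ∂(vol n) :=
          setLIntegral_mono' Metric.isClosed_closedBall.measurableSet hpt
      _ = ENNReal.ofReal M * vol n (Metric.closedBall 0 δ) := setLIntegral_const _ _
      _ < ⊤ := ENNReal.mul_lt_top ENNReal.ofReal_lt_top (measure_lt_top _ _)
  exact hfin.ne

lemma vol_cb_pos (n : ℕ) (hn : 1 ≤ n) (δ : ℝ) (hδ0 : 0 < δ) (hδ1 : δ < 1) :
    0 < (vol n (Metric.closedBall 0 δ)).toReal := by
  haveI : Inhabited (Fin n) := ⟨⟨0, hn⟩⟩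
  haveI : Nontrivial (Cn n) := inferInstance
  have hV0 : volume (unitBall n) ≠ 0 := by
    rw [unitBall]; exact (Metric.measure_ball_pos _ _ one_pos).ne'
  have hVt : volume (unitBall n) ≠ ⊤ := by
    rw [unitBall]; exact measure_ball_lt_top.ne
  have happ : vol n (Metric.closedBall 0 δ)
      = (volume (unitBall n))⁻¹ * volume (Metric.closedBall (0:Cn n) δ) := by
    rw [vol, Measure.smul_apply, smul_eq_mul,
      Measure.restrict_apply Metric.isClosed_closedBall.measurableSet]
    congr 1
    rw [Set.inter_eq_self_of_subset_left]
    rw [unitBall]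
    exact Metric.closedBall_subset_ball hδ1
  rw [happ]
  apply ENNReal.toReal_pos
  · apply mul_ne_zero
    · simpa [ENNReal.inv_eq_zero] using hVt
    · have : (0:ℝ≥0∞) < volume (Metric.ball (0:Cn n) δ) := Metric.measure_ball_pos _ _ hδ0
      exact fun h => this.ne' (le_antisymm (h ▸ measure_mono Metric.ball_subset_closedBall) (by simp))
  · exact ENNReal.mul_ne_top (by simpa using hV0) measure_closedBall_lt_top.ne

/-- if `T_{a,b,c}` is bounded from `L^p_α` (`1 ≤ p ≤ ∞`) to `L^q_β`
(`1 ≤ q < ∞`), then `-qa < β+1`. -/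
theorem stmt14 (n : ℕ) (hn : 1 ≤ n) (p : ℝ≥0∞) (q α β a b c : ℝ)
    (hp : 1 ≤ p) (hq : 1 ≤ q) (hα : -1 < α) (hβ : -1 < β)
    (hT : IsBddOp n (Tker n a b c) (vol n) p (ENNReal.ofReal q)
      (if p = ⊤ then vol n else wvol n α) (wvol n β)) :
    -q * a < β + 1 := by
  by_contra hcon
  push_neg at hcon
  have ht : q * a + β ≤ -1 := by linarith
  obtain ⟨δ, hδ0, hδ1, hδc⟩ := delta_exists c
  haveI := vol_finite n
  set f := (Metric.closedBall (0:Cn n) δ).indicator (fun _ => (1:ℂ)) with hf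
  obtain ⟨C, hC0, hCf⟩ := hT
  have hμs : (if p = ⊤ then vol n else wvol n α) (Metric.closedBall 0 δ) ≠ ⊤ := by
    split_ifs
    · exact measure_ne_top _ _
    · exact wvol_closedBall_ne_top n α δ hα hδ1
  have hmem : MemLp f p (if p = ⊤ then vol n else wvol n α) :=
    memLp_indicator_const p Metric.isClosed_closedBall.measurableSet (1:ℂ) (Or.inr hμs)
  obtain ⟨hae, hnorm⟩ := hCf f hmem
  set κ := min 1 ((1 - δ^2) ^ b) with hκdef
  have hδsq : (0:ℝ) < 1 - δ^2 := by nlinarith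
  have hκ0 : 0 < κ := lt_min one_pos (Real.rpow_pos_of_pos hδsq b)
  set m0 := κ / 2 * (vol n (Metric.closedBall 0 δ)).toReal with hm0def
  have hm0 : 0 < m0 := mul_pos (by linarith) (vol_cb_pos n hn δ hδ0 hδ1)
  have hac : wvol n β ≪ vol n := withDensity_absolutelyContinuous _ _
  have haeb : ∀ᵐ z ∂(wvol n β), Integrable (fun w => Tker n a b c z w * f w) (vol n) :=
    hae.filter_mono hac.ae_le
  have hball : ∀ᵐ z ∂(wvol n β), z ∈ unitBall n := by
    rw [MeasureTheory.ae_iff]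
    have hcompl : {z : Cn n | z ∉ unitBall n} = (Metric.ball (0:Cn n) 1)ᶜ := rfl
    rw [hcompl, wvol, withDensity_apply _ Metric.isOpen_ball.measurableSet.compl]
    apply setLIntegral_measure_zero
    rw [vol, Measure.smul_apply, smul_eq_mul,
      Measure.restrict_apply Metric.isOpen_ball.measurableSet.compl]
    simp [unitBall]
  have hlow : ∀ᵐ z ∂(wvol n β), ‖m0 * (1 - ‖z‖ ^ 2) ^ a‖ ≤
      ‖∫ w, Tker n a b c z w * f w ∂(vol n)‖ := by
    filter_upwards [haeb, hball] with z hint hz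
    have hz' : ‖z‖ < 1 := by
      simpa [unitBall, Metric.mem_ball, dist_zero_right] using hz
    have hzx : (0:ℝ) ≤ 1 - ‖z‖ ^ 2 := by nlinarith [norm_nonneg z]
    have key := lower_bound n a b c δ hδ0 hδ1 hδc z hz' hint
    have hnn : (0:ℝ) ≤ m0 * (1 - ‖z‖ ^ 2) ^ a := by
      have := Real.rpow_nonneg hzx a
      positivity
    rw [Real.norm_of_nonneg hnn]
    calc m0 * (1 - ‖z‖ ^ 2) ^ a
        = κ / 2 * (vol n (Metric.closedBall 0 δ)).toReal * (1 - ‖z‖ ^ 2) ^ a := by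
          rw [hm0def]
      _ ≤ _ := key
  have hchain : eLpNorm (fun z : Cn n => m0 * (1 - ‖z‖ ^ 2) ^ a) (ENNReal.ofReal q)
      (wvol n β) ≤ ENNReal.ofReal C * eLpNorm f p (if p = ⊤ then vol n else wvol n α) :=
    le_trans (eLpNorm_mono_ae hlow) hnorm
  rw [elp_top n hn q β a hq hβ ht m0 hm0] at hchain
  exact ENNReal.mul_ne_top ENNReal.ofReal_ne_top hmem.2.ne (top_le_iff.1 hchain)
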